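/- Rotation distance is subadditive under splitting at any common edge: for trees S, T sharing a common edge and the induced pairs (S1,T1), (S2,T2), d_R(S,T) ≤ d_R(S1,T1) + d_R(S2,T2). -/
import Mathlib


inductive BT : Type
  | leaf : BT
  | node : BT → BT → BT
deriving DecidableEq

namespace BT

/-- number of internal nodes -/
def size : BT → ℕ
  | leaf => 0
  | node l r => size l + size r + 1

/-- number of leaves -/
def nl (t : BT) : ℕ := size t + 1

/-- one (right) rotation somewhere in the tree -/
inductive Rot : BT → BT → Prop
  | root (a b c : BT) : Rot (node (node a b) c) (node a (node b c))
  | congrL {l l' : BT} (r : BT) : Rot l l' → Rot (node l r) (node l' r)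
  | congrR (l : BT) {r r' : BT} : Rot r r' → Rot (node l r) (node l r')

/-- a rotation move: a right rotation or its inverse (a left rotation) -/
def Move (s t : BT) : Prop := Rot s t ∨ Rot t s

/-- `Chain n s t`: `s` is transformed into `t` by `n` rotation moves -/
inductive Chain : ℕ → BT → BT → Prop
  | refl (t : BT) : Chain 0 t t
  | step {n : ℕ} {s u t : BT} : Move s u → Chain n u t → Chain (n + 1) s t

/-- rotation distance -/
noncomputable def dR (s t : BT) : ℕ := sInf {n | Chain n s t}

def isNode : BT → Bool
  | leaf => false
  | node _ _ => true

/-- the multiset of leaf partitions induced by internal edges, where the leaves of the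
tree are numbered from `k` on, left to right; each internal edge is recorded by the
set of leaf numbers below it. -/
def iparts : BT → ℕ → Multiset (Finset ℕ)
  | leaf, _ => 0
  | node l r, k =>
      ((if isNode l then {Finset.Ico k (k + nl l)} else 0) + iparts l k)
        + ((if isNode r then {Finset.Ico (k + nl l) (k + nl l + nl r)} else 0)
            + iparts r (k + nl l))

/-- number of common edge pairs -/
def commonEdges (s t : BT) : ℕ := ((iparts s 0) ∩ (iparts t 0)).card

/-- replace the `i`-th leaf (numbered left to right from 0) of the first tree by the
second tree -/
def graft : BT → ℕ → BT → BT
  | leaf, 0, u => u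
  | leaf, _ + 1, _ => leaf
  | node l r, i, u =>
      if i < l.nl then node (graft l i u) r else node l (graft r (i - l.nl) u)


lemma Rot.size_eq {s t : BT} (h : Rot s t) : s.size = t.size := by
  induction h with
  | root a b c => simp [size]; omega
  | congrL r _ ih => simp [size, ih]
  | congrR l _ ih => simp [size, ih]

lemma Move.size_eq {s t : BT} (h : Move s t) : s.size = t.size := by
  cases h with
  | inl h => exact h.size_eq
  | inr h => exact h.size_eq.symm

lemma Chain.size_eq {n : ℕ} {s t : BT} (h : Chain n s t) : s.size = t.size := by
  induction h with
  | refl t => rfl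
  | step m _ ih => exact m.size_eq.trans ih

lemma Rot.nl_eq {s t : BT} (h : Rot s t) : s.nl = t.nl := by
  simp [nl, h.size_eq]

lemma nl_node (l r : BT) : (node l r).nl = l.nl + r.nl := by
  simp [nl, size]; omega

lemma nl_pos (t : BT) : 0 < t.nl := by simp [nl]

lemma Rot.graft_left {s s' : BT} (h : Rot s s') (i : ℕ) (u : BT) :
    Rot (graft s i u) (graft s' i u) := by
  induction h generalizing i with
  | root a b c =>
    by_cases h1 : i < a.nl
    · have h2 : i < (node a b).nl := by rw [nl_node]; omega
      simp only [graft, if_pos h1, if_pos h2]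
      exact Rot.root _ _ _
    · by_cases h3 : i < (node a b).nl
      · have h4 : i - a.nl < b.nl := by rw [nl_node] at h3; omega
        simp only [graft, if_pos h3, if_neg h1, if_pos h4]
        exact Rot.root _ _ _
      · have h4 : ¬ i - a.nl < b.nl := by rw [nl_node] at h3; omega
        have h5 : i - a.nl - b.nl = i - (node a b).nl := by rw [nl_node]; omega
        simp only [graft, if_neg h3, if_neg h1, if_neg h4, h5]
        exact Rot.root _ _ _
  | congrL r h ih =>
    rename_i l l'
    have hnl : l.nl = l'.nl := h.nl_eq
    by_cases h1 : i < l.nl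
    · simp only [graft, if_pos h1, if_pos (hnl ▸ h1)]
      exact Rot.congrL _ (ih i)
    · simp only [graft, if_neg h1, if_neg (hnl ▸ h1), hnl]
      exact Rot.congrL _ h
  | congrR l h ih =>
    by_cases h1 : i < l.nl
    · simp only [graft, if_pos h1]
      exact Rot.congrR _ h
    · simp only [graft, if_neg h1]
      exact Rot.congrR _ (ih _)

lemma Rot.graft_inner {u u' : BT} (h : Rot u u') (s : BT) (i : ℕ) (hi : i < s.nl) :
    Rot (graft s i u) (graft s i u') := by
  induction s generalizing i with
  | leaf =>
    have : i = 0 := by simp [nl, size] at hi; omega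
    subst this
    simpa [graft] using h
  | node l r ihl ihr =>
    by_cases h1 : i < l.nl
    · simp only [graft, if_pos h1]
      exact Rot.congrL _ (ihl i h1)
    · simp only [graft, if_neg h1]
      rw [nl_node] at hi
      exact Rot.congrR _ (ihr _ (by omega))

lemma Move.graft_left {s s' : BT} (h : Move s s') (i : ℕ) (u : BT) :
    Move (graft s i u) (graft s' i u) := by
  cases h with
  | inl h => exact Or.inl (h.graft_left i u)
  | inr h => exact Or.inr (h.graft_left i u)

lemma Move.graft_inner {u u' : BT} (h : Move u u') (s : BT) (i : ℕ) (hi : i < s.nl) :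
    Move (graft s i u) (graft s i u') := by
  cases h with
  | inl h => exact Or.inl (h.graft_inner s i hi)
  | inr h => exact Or.inr (h.graft_inner s i hi)

lemma Chain.graft_left {n : ℕ} {s t : BT} (h : Chain n s t) (i : ℕ) (u : BT) :
    Chain n (graft s i u) (graft t i u) := by
  induction h with
  | refl t => exact Chain.refl _
  | step m _ ih => exact Chain.step (m.graft_left i u) ih

lemma Chain.graft_inner {n : ℕ} {u v : BT} (h : Chain n u v) (s : BT) (i : ℕ)
    (hi : i < s.nl) : Chain n (graft s i u) (graft s i v) := by
  induction h with
  | refl t => exact Chain.refl _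
  | step m _ ih => exact Chain.step (m.graft_inner s i hi) ih

lemma Chain.trans {m n : ℕ} {s u t : BT} (h1 : Chain m s u) (h2 : Chain n u t) :
    Chain (m + n) s t := by
  induction h1 with
  | refl t => simpa using h2
  | step mv _ ih =>
    have := Chain.step mv (ih h2)
    rename_i k _ _ _ _
    have he : k + n + 1 = k + 1 + n := by omega
    rwa [he] at this

lemma Chain.snoc {n : ℕ} {s u t : BT} (h : Chain n s u) (mv : Move u t) :
    Chain (n + 1) s t := by
  induction h with
  | refl t => exact Chain.step mv (Chain.refl _)
  | step mv' _ ih =>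
    have := Chain.step mv' (ih mv)
    rename_i k _ _ _ _
    have he : k + 1 + 1 = k + 1 + 1 := rfl
    exact this

lemma Move.symm {s t : BT} (h : Move s t) : Move t s := Or.symm h

lemma Chain.symm {n : ℕ} {s t : BT} (h : Chain n s t) : Chain n t s := by
  induction h with
  | refl t => exact Chain.refl _
  | step mv _ ih => exact ih.snoc mv.symm

/-- the right comb with `n` internal nodes -/
def comb : ℕ → BT
  | 0 => leaf
  | n + 1 => node leaf (comb n)

lemma comb_size (n : ℕ) : (comb n).size = n := by
  induction n with
  | zero => rfl
  | succ n ih => simp [comb, size, ih]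

lemma chain_congrL {n : ℕ} {l l' : BT} (r : BT) (h : Chain n l l') :
    Chain n (node l r) (node l' r) := by
  induction h with
  | refl t => exact Chain.refl _
  | step mv _ ih =>
    refine Chain.step ?_ ih
    cases mv with
    | inl h => exact Or.inl (Rot.congrL r h)
    | inr h => exact Or.inr (Rot.congrL r h)

lemma chain_congrR {n : ℕ} (l : BT) {r r' : BT} (h : Chain n r r') :
    Chain n (node l r) (node l r') := by
  induction h with
  | refl t => exact Chain.refl _
  | step mv _ ih =>
    refine Chain.step ?_ ih
    cases mv with
    | inl h => exact Or.inl (Rot.congrR l h)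
    | inr h => exact Or.inr (Rot.congrR l h)

lemma comb_merge (a b : ℕ) : ∃ n, Chain n (node (comb a) (comb b)) (comb (a + b + 1)) := by
  induction a generalizing b with
  | zero => exact ⟨0, by simpa [comb] using Chain.refl (node leaf (comb b))⟩
  | succ a ih =>
    obtain ⟨n, hn⟩ := ih b
    refine ⟨n + 1, ?_⟩
    have mv : Move (node (node leaf (comb a)) (comb b))
        (node leaf (node (comb a) (comb b))) := Or.inl (Rot.root _ _ _)
    have h2 : Chain n (node leaf (node (comb a) (comb b)))
        (node leaf (comb (a + b + 1))) := chain_congrR _ hn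
    have : a + 1 + b + 1 = (a + b + 1) + 1 := by omega
    rw [this]
    exact Chain.step mv (by simpa [comb] using h2)

lemma to_comb (t : BT) : ∃ n, Chain n t (comb t.size) := by
  induction t with
  | leaf => exact ⟨0, Chain.refl _⟩
  | node l r ihl ihr =>
    obtain ⟨n1, h1⟩ := ihl
    obtain ⟨n2, h2⟩ := ihr
    obtain ⟨n3, h3⟩ := comb_merge l.size r.size
    refine ⟨n1 + n2 + n3, ?_⟩
    have c1 : Chain n1 (node l r) (node (comb l.size) r) := chain_congrL _ h1
    have c2 : Chain n2 (node (comb l.size) r) (node (comb l.size) (comb r.size)) :=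
      chain_congrR _ h2
    have : (node l r).size = l.size + r.size + 1 := rfl
    rw [this]
    exact (c1.trans c2).trans h3

lemma chain_exists {s t : BT} (h : s.size = t.size) : ∃ n, Chain n s t := by
  obtain ⟨n1, h1⟩ := to_comb s
  obtain ⟨n2, h2⟩ := to_comb t
  rw [h] at h1
  exact ⟨n1 + n2, h1.trans h2.symm⟩

theorem dR_subadditive_split (S1 T1 S2 T2 : BT) (i : ℕ)
    (hsz1 : S1.size = T1.size) (hi : i < S1.nl) (hsz2 : S2.size = T2.size)
    (hS2 : S2 ≠ leaf) (hT2 : T2 ≠ leaf) :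
    dR (graft S1 i S2) (graft T1 i T2) ≤ dR S1 T1 + dR S2 T2 := by
  obtain ⟨m1, hm1⟩ := chain_exists hsz1
  obtain ⟨m2, hm2⟩ := chain_exists hsz2
  have ne1 : {n | Chain n S1 T1}.Nonempty := ⟨m1, hm1⟩
  have ne2 : {n | Chain n S2 T2}.Nonempty := ⟨m2, hm2⟩
  have h1 : Chain (dR S1 T1) S1 T1 := Nat.sInf_mem ne1
  have h2 : Chain (dR S2 T2) S2 T2 := Nat.sInf_mem ne2
  have hiT : i < T1.nl := by simpa [nl, ← hsz1] using hi
  have c1 : Chain (dR S1 T1) (graft S1 i S2) (graft T1 i S2) := h1.graft_left i S2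
  have c2 : Chain (dR S2 T2) (graft T1 i S2) (graft T1 i T2) := h2.graft_inner T1 i hiT
  exact Nat.sInf_le (c1.trans c2)

end BT
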